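/- Let $k$ be a field, $T=k[X,Y]$, and $A=k[X^5,XY^4,Y^5,X^9Y^6,X^8Y^7,X^4Y^{11}]\subseteq T$. Set $a=Y^{10}$ and $b=X^5$. Then $aA:_A b=aA:_A b^2=(Y^{10},X^3Y^{17},X^4Y^{16})A$, and consequently $\frac{A}{a}\cap\frac{A}{b}=A[X^3Y^7,X^4Y^6]=k[X^5,XY^4,Y^5,X^3Y^7,X^4Y^6]$ inside $\mathrm{Q}(A)$. -/

import Mathlib

set_option synthInstance.maxHeartbeats 1000000
set_option maxHeartbeats 4000000

open MvPolynomial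

/-- The subring `A = k[X⁵, XY⁴, Y⁵, X⁹Y⁶, X⁸Y⁷, X⁴Y¹¹]` of `T = k[X,Y]`. -/
noncomputable def subA (k : Type*) [Field k] : Subalgebra k (MvPolynomial (Fin 2) k) :=
  Algebra.adjoin k
    {X 0 ^ 5, X 0 * X 1 ^ 4, X 1 ^ 5, X 0 ^ 9 * X 1 ^ 6, X 0 ^ 8 * X 1 ^ 7,
      X 0 ^ 4 * X 1 ^ 11}

/-- Arithmetic description of the exponent semigroup of `A`. -/
def memS (m n : ℕ) : Prop :=
  ((m + n) % 5 = 0 ∧ 4 * (m % 5) ≤ n) ∨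
  (9 ≤ m ∧ 6 ≤ n ∧ (m + n) % 5 = 0 ∧ 4 * ((m - 9) % 5) ≤ n - 6) ∨
  (8 ≤ m ∧ 7 ≤ n ∧ (m + n) % 5 = 0 ∧ 4 * ((m - 8) % 5) ≤ n - 7) ∨
  (4 ≤ m ∧ 11 ≤ n ∧ (m + n) % 5 = 0 ∧ 4 * ((m - 4) % 5) ≤ n - 11)

/-- Exponents lying in `(0,10)+S ∪ (3,17)+S ∪ (4,16)+S`. -/
def memQ (m n : ℕ) : Prop :=
  (10 ≤ n ∧ memS m (n - 10)) ∨ (3 ≤ m ∧ 17 ≤ n ∧ memS (m - 3) (n - 17)) ∨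
  (4 ≤ m ∧ 16 ≤ n ∧ memS (m - 4) (n - 16))

theorem memS_add {m n m' n' : ℕ} (h : memS m n) (h' : memS m' n') :
    memS (m + m') (n + n') := by
  unfold memS at *; omega

instance (m n : ℕ) : Decidable (memS m n) := by unfold memS; infer_instance
instance (m n : ℕ) : Decidable (memQ m n) := by unfold memQ; infer_instance

theorem memS_mdown {m n : ℕ} (h : 14 ≤ m) : memS m n ↔ memS (m - 5) n := by
  unfold memS; omega

theorem memS_ndown {m n : ℕ} (h : 27 ≤ n) : memS m n ↔ (m + n) % 5 = 0 := by
  unfold memS; omega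

theorem memQ_mdown {m n : ℕ} (h : 18 ≤ m) : memQ m n ↔ memQ (m - 5) n := by
  have e1 : memS m (n - 10) ↔ memS (m - 5) (n - 10) := memS_mdown (by omega)
  have e2 : memS (m - 3) (n - 17) ↔ memS (m - 5 - 3) (n - 17) := by
    rw [memS_mdown (by omega : 14 ≤ m - 3), show m - 3 - 5 = m - 5 - 3 from by omega]
  have e3 : memS (m - 4) (n - 16) ↔ memS (m - 5 - 4) (n - 16) := by
    rw [memS_mdown (by omega : 14 ≤ m - 4), show m - 4 - 5 = m - 5 - 4 from by omega]
  unfold memQ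
  rw [e1, e2, e3]
  constructor <;> intro H <;>
    rcases H with ⟨h1, hS⟩ | ⟨h1, h2, hS⟩ | ⟨h1, h2, hS⟩
  · exact Or.inl ⟨h1, hS⟩
  · exact Or.inr (Or.inl ⟨by omega, h2, hS⟩)
  · exact Or.inr (Or.inr ⟨by omega, h2, hS⟩)
  · exact Or.inl ⟨h1, hS⟩
  · exact Or.inr (Or.inl ⟨by omega, h2, hS⟩)
  · exact Or.inr (Or.inr ⟨by omega, h2, hS⟩)

theorem claimA_base : ∀ m < 18, ∀ n < 37,
    memS m n → 10 ≤ n → memS (m + 10) (n - 10) → memQ m n := by decide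

theorem claimA {m n : ℕ} (h : memS m n) (h10 : 10 ≤ n) (h2 : memS (m + 10) (n - 10)) :
    memQ m n := by
  induction m using Nat.strong_induction_on generalizing n with
  | _ m ih =>
    rcases lt_or_ge n 37 with hn | hn
    · rcases lt_or_ge m 18 with hm | hm
      · exact claimA_base m hm n hn h h10 h2
      · rw [memQ_mdown (by omega)]
        refine ih (m - 5) (by omega) ((memS_mdown (by omega)).mp h) h10 ?_
        rw [show m - 5 + 10 = m + 10 - 5 from by omega]
        exact (memS_mdown (by omega)).mp h2
    · have h5 : (m + n) % 5 = 0 := (memS_ndown (by omega)).mp h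
      exact Or.inl ⟨by omega, (memS_ndown (by omega)).mpr (by omega)⟩

section semigroup
variable {k : Type*} [Field k]

theorem gen1_mem : (X 0 ^ 5 : MvPolynomial (Fin 2) k) ∈ subA k :=
  Algebra.subset_adjoin (by simp)
theorem gen2_mem : (X 0 * X 1 ^ 4 : MvPolynomial (Fin 2) k) ∈ subA k :=
  Algebra.subset_adjoin (by simp)
theorem gen3_mem : (X 1 ^ 5 : MvPolynomial (Fin 2) k) ∈ subA k :=
  Algebra.subset_adjoin (by simp)
theorem gen4_mem : (X 0 ^ 9 * X 1 ^ 6 : MvPolynomial (Fin 2) k) ∈ subA k :=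
  Algebra.subset_adjoin (by simp)
theorem gen5_mem : (X 0 ^ 8 * X 1 ^ 7 : MvPolynomial (Fin 2) k) ∈ subA k :=
  Algebra.subset_adjoin (by simp)
theorem gen6_mem : (X 0 ^ 4 * X 1 ^ 11 : MvPolynomial (Fin 2) k) ∈ subA k :=
  Algebra.subset_adjoin (by simp)

theorem P_mem {m n : ℕ} (h5 : (m + n) % 5 = 0) (h4 : 4 * (m % 5) ≤ n) :
    (X 0 ^ m * X 1 ^ n : MvPolynomial (Fin 2) k) ∈ subA k := by
  obtain ⟨q, s, t, hm, hn⟩ : ∃ q s t, m = 5 * q + s ∧ n = 4 * s + 5 * t :=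
    ⟨m / 5, m % 5, (n - 4 * (m % 5)) / 5, by omega, by omega⟩
  subst hm; subst hn
  have : (X 0 ^ (5 * q + s) * X 1 ^ (4 * s + 5 * t) : MvPolynomial (Fin 2) k)
      = (X 0 ^ 5) ^ q * (X 0 * X 1 ^ 4) ^ s * (X 1 ^ 5) ^ t := by ring
  rw [this]
  exact mul_mem (mul_mem (pow_mem gen1_mem q) (pow_mem gen2_mem s)) (pow_mem gen3_mem t)

theorem memS_mem {m n : ℕ} (h : memS m n) :
    (X 0 ^ m * X 1 ^ n : MvPolynomial (Fin 2) k) ∈ subA k := by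
  rcases h with ⟨h5, h4⟩ | ⟨hm, hn, h5, h4⟩ | ⟨hm, hn, h5, h4⟩ | ⟨hm, hn, h5, h4⟩
  · exact P_mem h5 h4
  · obtain ⟨m', n', rfl, rfl⟩ : ∃ m' n', m = 9 + m' ∧ n = 6 + n' :=
      ⟨m - 9, n - 6, by omega, by omega⟩
    have : (X 0 ^ (9 + m') * X 1 ^ (6 + n') : MvPolynomial (Fin 2) k)
        = (X 0 ^ 9 * X 1 ^ 6) * (X 0 ^ m' * X 1 ^ n') := by ring
    rw [this]
    exact mul_mem gen4_mem (P_mem (by omega) (by omega))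
  · obtain ⟨m', n', rfl, rfl⟩ : ∃ m' n', m = 8 + m' ∧ n = 7 + n' :=
      ⟨m - 8, n - 7, by omega, by omega⟩
    have : (X 0 ^ (8 + m') * X 1 ^ (7 + n') : MvPolynomial (Fin 2) k)
        = (X 0 ^ 8 * X 1 ^ 7) * (X 0 ^ m' * X 1 ^ n') := by ring
    rw [this]
    exact mul_mem gen5_mem (P_mem (by omega) (by omega))
  · obtain ⟨m', n', rfl, rfl⟩ : ∃ m' n', m = 4 + m' ∧ n = 11 + n' :=
      ⟨m - 4, n - 11, by omega, by omega⟩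
    have : (X 0 ^ (4 + m') * X 1 ^ (11 + n') : MvPolynomial (Fin 2) k)
        = (X 0 ^ 4 * X 1 ^ 11) * (X 0 ^ m' * X 1 ^ n') := by ring
    rw [this]
    exact mul_mem gen6_mem (P_mem (by omega) (by omega))

theorem xy_pow_eq_monomial (m n : ℕ) :
    (X 0 ^ m * X 1 ^ n : MvPolynomial (Fin 2) k)
      = monomial (Finsupp.single 0 m + Finsupp.single 1 n) 1 := by
  rw [X_pow_eq_monomial, X_pow_eq_monomial, monomial_mul, one_mul]

theorem supp_xy {m n : ℕ} {d : Fin 2 →₀ ℕ}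
    (hd : d ∈ (X 0 ^ m * X 1 ^ n : MvPolynomial (Fin 2) k).support) :
    d 0 = m ∧ d 1 = n := by
  classical
  rw [xy_pow_eq_monomial, support_monomial, if_neg one_ne_zero, Finset.mem_singleton] at hd
  subst hd
  simp [Finsupp.single_apply]

theorem supp_subA {f : MvPolynomial (Fin 2) k} (hf : f ∈ subA k) :
    ∀ d ∈ f.support, memS (d 0) (d 1) := by
  classical
  induction hf using Algebra.adjoin_induction with
  | mem x hx =>
    intro d hd
    rcases hx with rfl | rfl | rfl | rfl | rfl | rfl
    · have h5 : (X 0 ^ 5 : MvPolynomial (Fin 2) k) = X 0 ^ 5 * X 1 ^ 0 := by ring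
      have := supp_xy (m := 5) (n := 0) (h5 ▸ hd)
      rw [this.1, this.2]; left; decide
    · have h5 : (X 0 * X 1 ^ 4 : MvPolynomial (Fin 2) k) = X 0 ^ 1 * X 1 ^ 4 := by ring
      have := supp_xy (m := 1) (n := 4) (h5 ▸ hd)
      rw [this.1, this.2]; left; decide
    · have h5 : (X 1 ^ 5 : MvPolynomial (Fin 2) k) = X 0 ^ 0 * X 1 ^ 5 := by ring
      have := supp_xy (m := 0) (n := 5) (h5 ▸ hd)
      rw [this.1, this.2]; left; decide
    · have := supp_xy (m := 9) (n := 6) hd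
      rw [this.1, this.2]; right; left; decide
    · have := supp_xy (m := 8) (n := 7) hd
      rw [this.1, this.2]; right; right; left; decide
    · have := supp_xy (m := 4) (n := 11) hd
      rw [this.1, this.2]; right; right; right; decide
  | algebraMap r =>
    intro d hd
    have : d = 0 := by
      rw [show (algebraMap k (MvPolynomial (Fin 2) k) r : MvPolynomial (Fin 2) k) = C r from rfl,
        C_apply, support_monomial] at hd
      split_ifs at hd with h
      · simp at hd
      · simpa using hd
    subst this
    left; decide
  | add x y hx hy ihx ihy =>
    intro d hd
    rcases Finset.mem_union.mp (support_add hd) with h | h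
    · exact ihx d h
    · exact ihy d h
  | mul x y hx hy ihx ihy =>
    intro d hd
    obtain ⟨d1, hd1, d2, hd2, rfl⟩ := Finset.mem_add.mp (support_mul x y hd)
    have := memS_add (ihx d1 hd1) (ihy d2 hd2)
    simpa using this

theorem fin2_eq (d : Fin 2 →₀ ℕ) : d = Finsupp.single 0 (d 0) + Finsupp.single 1 (d 1) := by
  ext i
  fin_cases i <;> simp [Finsupp.single_apply]

theorem monomial_eq_xy (d : Fin 2 →₀ ℕ) (c : k) :
    (monomial d c : MvPolynomial (Fin 2) k) = C c * (X 0 ^ (d 0) * X 1 ^ (d 1)) := by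
  rw [xy_pow_eq_monomial, C_mul_monomial, mul_one, ← fin2_eq]

theorem polyKL : ∀ (N : ℕ) (Z : MvPolynomial (Fin 2) k), Z.support.card ≤ N →
    (∀ d ∈ Z.support, memQ (d 0) (d 1)) →
    ∃ W1 W2 W3 : MvPolynomial (Fin 2) k, W1 ∈ subA k ∧ W2 ∈ subA k ∧ W3 ∈ subA k ∧
      Z = X 1 ^ 10 * W1 + X 0 ^ 3 * X 1 ^ 17 * W2 + X 0 ^ 4 * X 1 ^ 16 * W3 := by
  intro N
  induction N with
  | zero =>
    intro Z hcard _
    have : Z = 0 := support_eq_empty.mp (Finset.card_eq_zero.mp (Nat.le_zero.mp hcard))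
    exact ⟨0, 0, 0, zero_mem _, zero_mem _, zero_mem _, by simp [this]⟩
  | succ N ih =>
    intro Z hcard hQ
    rcases Finset.eq_empty_or_nonempty Z.support with h | ⟨d₀, hd₀⟩
    · have : Z = 0 := support_eq_empty.mp h
      exact ⟨0, 0, 0, zero_mem _, zero_mem _, zero_mem _, by simp [this]⟩
    · classical
      set cc := coeff d₀ Z with hcc
      set Z' := Z - monomial d₀ cc with hZ'
      have hsupp' : ∀ d, d ∈ Z'.support → d ∈ Z.support ∧ d ≠ d₀ := by
        intro d hd
        rw [mem_support_iff] at hd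
        rw [hZ', coeff_sub, coeff_monomial] at hd
        by_cases hdd : d₀ = d
        · subst hdd; simp [hcc] at hd
        · constructor
          · rw [mem_support_iff]
            intro h0
            rw [h0, if_neg hdd] at hd
            simp at hd
          · exact fun hh => hdd hh.symm
      have hsub : Z'.support ⊆ Z.support.erase d₀ := by
        intro d hd
        exact Finset.mem_erase.mpr ⟨(hsupp' d hd).2, (hsupp' d hd).1⟩
      have hcard' : Z'.support.card ≤ N := by
        have h1 := Finset.card_le_card hsub
        have h2 := Finset.card_erase_of_mem hd₀
        omega
      obtain ⟨W1, W2, W3, hW1, hW2, hW3, hWe⟩ :=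
        ih Z' hcard' (fun d hd => hQ d (hsupp' d hd).1)
      have hZeq : Z = monomial d₀ cc + Z' := by rw [hZ']; ring
      rcases hQ d₀ hd₀ with ⟨h10, hS⟩ | ⟨h3, h17, hS⟩ | ⟨h4, h16, hS⟩
      · refine ⟨C cc * (X 0 ^ (d₀ 0) * X 1 ^ (d₀ 1 - 10)) + W1, W2, W3,
          add_mem (mul_mem (Subalgebra.algebraMap_mem _ cc) (memS_mem hS)) hW1, hW2, hW3, ?_⟩
        obtain ⟨n', hn'⟩ : ∃ n', d₀ 1 = n' + 10 := ⟨d₀ 1 - 10, by omega⟩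
        rw [hZeq, hWe, monomial_eq_xy, hn']
        simp only [Nat.add_sub_cancel]
        ring
      · refine ⟨W1, C cc * (X 0 ^ (d₀ 0 - 3) * X 1 ^ (d₀ 1 - 17)) + W2, W3,
          hW1, add_mem (mul_mem (Subalgebra.algebraMap_mem _ cc) (memS_mem hS)) hW2, hW3, ?_⟩
        obtain ⟨m', hm', n', hn'⟩ : ∃ m', d₀ 0 = m' + 3 ∧ ∃ n', d₀ 1 = n' + 17 :=
          ⟨d₀ 0 - 3, by omega, d₀ 1 - 17, by omega⟩
        rw [hZeq, hWe, monomial_eq_xy, hm', hn']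
        simp only [Nat.add_sub_cancel]
        ring
      · refine ⟨W1, W2, C cc * (X 0 ^ (d₀ 0 - 4) * X 1 ^ (d₀ 1 - 16)) + W3,
          hW1, hW2, add_mem (mul_mem (Subalgebra.algebraMap_mem _ cc) (memS_mem hS)) hW3, ?_⟩
        obtain ⟨m', hm', n', hn'⟩ : ∃ m', d₀ 0 = m' + 4 ∧ ∃ n', d₀ 1 = n' + 16 :=
          ⟨d₀ 0 - 4, by omega, d₀ 1 - 16, by omega⟩
        rw [hZeq, hWe, monomial_eq_xy, hm', hn']
        simp only [Nat.add_sub_cancel]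
        ring

section main
variable (a b c d : subA k)
  (ha : (a : MvPolynomial (Fin 2) k) = X 1 ^ 10)
  (hb : (b : MvPolynomial (Fin 2) k) = X 0 ^ 5)
  (hc : (c : MvPolynomial (Fin 2) k) = X 0 ^ 3 * X 1 ^ 17)
  (hd : (d : MvPolynomial (Fin 2) k) = X 0 ^ 4 * X 1 ^ 16)

include ha hb hc hd

theorem span_le_colon : Ideal.span {a, c, d} ≤ (Ideal.span {a}).colon (Ideal.span {b}) := by
  rw [Ideal.span_le]
  rintro x (rfl | rfl | rfl) <;> rw [SetLike.mem_coe, Ideal.mem_colon_span_singleton]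
  · exact Ideal.mem_span_singleton'.mpr ⟨b, by ring⟩
  · refine Ideal.mem_span_singleton'.mpr ⟨⟨X 0 ^ 8 * X 1 ^ 7, gen5_mem⟩, ?_⟩
    apply Subtype.ext
    push_cast
    rw [ha, hb, hc]
    ring
  · refine Ideal.mem_span_singleton'.mpr ⟨⟨X 0 ^ 9 * X 1 ^ 6, gen4_mem⟩, ?_⟩
    apply Subtype.ext
    push_cast
    rw [ha, hb, hd]
    ring

omit ha hb hc hd in
theorem colon_le_colon2 :
    (Ideal.span {a}).colon (Ideal.span {b}) ≤ (Ideal.span {a}).colon (Ideal.span {b ^ 2}) := by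
  intro z hz
  rw [Ideal.mem_colon_span_singleton] at hz ⊢
  rw [pow_two, ← mul_assoc]
  exact Ideal.mul_mem_right _ _ hz

theorem colon2_le_span :
    (Ideal.span {a}).colon (Ideal.span {b ^ 2}) ≤ Ideal.span {a, c, d} := by
  intro z hz
  rw [Ideal.mem_colon_span_singleton] at hz
  obtain ⟨w, hw⟩ := Ideal.mem_span_singleton'.mp hz
  have hpoly : (w : MvPolynomial (Fin 2) k) * X 1 ^ 10
      = X 0 ^ 10 * (z : MvPolynomial (Fin 2) k) := by
    have := congrArg (fun t : subA k => (t : MvPolynomial (Fin 2) k)) hw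
    push_cast at this
    rw [ha, hb] at this
    rw [this]; ring
  have hQ : ∀ e ∈ (z : MvPolynomial (Fin 2) k).support, memQ (e 0) (e 1) := by
    intro e he
    have hS : memS (e 0) (e 1) := supp_subA z.2 e he
    have hco : coeff (Finsupp.single 0 10 + e)
        (X 0 ^ 10 * (z : MvPolynomial (Fin 2) k))
        = coeff e (z : MvPolynomial (Fin 2) k) := by
      rw [X_pow_eq_monomial, coeff_monomial_mul, one_mul]
    have hne : coeff (Finsupp.single 0 10 + e)
        ((w : MvPolynomial (Fin 2) k) * X 1 ^ 10) ≠ 0 := by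
      rw [hpoly, hco]
      exact mem_support_iff.mp he
    rw [X_pow_eq_monomial, coeff_mul_monomial'] at hne
    split_ifs at hne with hle
    · have h10 : 10 ≤ e 1 := by
        have := Finsupp.single_le_iff.mp hle
        simpa [Finsupp.single_apply] using this
      have hmemw : memS ((Finsupp.single 0 10 + e - Finsupp.single 1 10 : Fin 2 →₀ ℕ) 0)
          ((Finsupp.single 0 10 + e - Finsupp.single 1 10 : Fin 2 →₀ ℕ) 1) :=
        supp_subA w.2 _ (mem_support_iff.mpr (by simpa using hne))
      have h0 : (Finsupp.single 0 10 + e - Finsupp.single 1 10 : Fin 2 →₀ ℕ) 0 = e 0 + 10 := by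
        simp [Finsupp.tsub_apply, Finsupp.single_apply]; omega
      have h1 : (Finsupp.single 0 10 + e - Finsupp.single 1 10 : Fin 2 →₀ ℕ) 1 = e 1 - 10 := by
        simp [Finsupp.tsub_apply, Finsupp.single_apply]
      rw [h0, h1] at hmemw
      exact claimA hS h10 hmemw
    · exact absurd rfl hne
  obtain ⟨W1, W2, W3, hW1, hW2, hW3, hWe⟩ :=
    polyKL (z : MvPolynomial (Fin 2) k).support.card _ le_rfl hQ
  have hzeq : z = a * ⟨W1, hW1⟩ + c * ⟨W2, hW2⟩ + d * ⟨W3, hW3⟩ := by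
    apply Subtype.ext
    push_cast
    rw [ha, hc, hd]
    exact hWe
  rw [hzeq]
  refine Ideal.add_mem _ (Ideal.add_mem _ ?_ ?_) ?_ <;>
    exact Ideal.mul_mem_right _ _ (Ideal.subset_span (by simp))

end main
end semigroup

theorem stmt19 (k : Type*) [Field k]
    (a b c d : subA k)
    (ha : (a : MvPolynomial (Fin 2) k) = X 1 ^ 10)
    (hb : (b : MvPolynomial (Fin 2) k) = X 0 ^ 5)
    (hc : (c : MvPolynomial (Fin 2) k) = X 0 ^ 3 * X 1 ^ 17)
    (hd : (d : MvPolynomial (Fin 2) k) = X 0 ^ 4 * X 1 ^ 16) :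
    (Ideal.span {a}).colon (Ideal.span {b}) = (Ideal.span {a}).colon (Ideal.span {b ^ 2}) ∧
    (Ideal.span {a}).colon (Ideal.span {b}) = Ideal.span {a, c, d} ∧
    ∀ u v : FractionRing (subA k),
      algebraMap (subA k) (FractionRing (subA k)) a * u =
        algebraMap (subA k) (FractionRing (subA k)) c →
      algebraMap (subA k) (FractionRing (subA k)) a * v =
        algebraMap (subA k) (FractionRing (subA k)) d →
      ({f | ∃ r : subA k, algebraMap (subA k) (FractionRing (subA k)) a * f =
          algebraMap (subA k) (FractionRing (subA k)) r} ∩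
        {f | ∃ r : subA k, algebraMap (subA k) (FractionRing (subA k)) b * f =
          algebraMap (subA k) (FractionRing (subA k)) r} =
        (Algebra.adjoin (subA k) {u, v} : Set (FractionRing (subA k)))) ∧
      ∀ p q r : subA k, (p : MvPolynomial (Fin 2) k) = X 0 ^ 5 →
        (q : MvPolynomial (Fin 2) k) = X 0 * X 1 ^ 4 →
        (r : MvPolynomial (Fin 2) k) = X 1 ^ 5 →
        letI : Algebra k (FractionRing (subA k)) :=
          ((algebraMap (subA k) (FractionRing (subA k))).comp
            (algebraMap k (subA k))).toAlgebra
        (Algebra.adjoin (subA k) {u, v} : Set (FractionRing (subA k))) =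
          (Algebra.adjoin k
            {algebraMap (subA k) (FractionRing (subA k)) p,
             algebraMap (subA k) (FractionRing (subA k)) q,
             algebraMap (subA k) (FractionRing (subA k)) r, u, v} :
            Set (FractionRing (subA k))) := by
  have hcolon2 : (Ideal.span {a}).colon (Ideal.span {b}) = Ideal.span {a, c, d} :=
    le_antisymm ((colon_le_colon2 a b).trans (colon2_le_span a b c d ha hb hc hd))
      (span_le_colon a b c d ha hb hc hd)
  have hcolon1 : (Ideal.span {a}).colon (Ideal.span {b})
      = (Ideal.span {a}).colon (Ideal.span {b ^ 2}) :=
    le_antisymm (colon_le_colon2 a b)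
      ((colon2_le_span a b c d ha hb hc hd).trans (span_le_colon a b c d ha hb hc hd))
  refine ⟨hcolon1, hcolon2, ?_⟩
  intro u v hu hv
  set im : subA k →+* FractionRing (subA k)
    := (algebraMap (subA k) (FractionRing (subA k))) with him
  -- basic facts
  have hanz : a ≠ 0 := by
    intro h0
    have : (a : MvPolynomial (Fin 2) k) = 0 := by rw [h0]; rfl
    rw [ha] at this
    exact pow_ne_zero 10 (X_ne_zero 1) this
  have hima : im a ≠ 0 := fun h0 =>
    hanz (IsFractionRing.injective (subA k) (FractionRing (subA k)) (by rw [h0, map_zero]))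
  have cancel : ∀ {s t : FractionRing (subA k)}, im a * s = im a * t → s = t := fun h => mul_left_cancel₀ hima h
  have inj : Function.Injective im := IsFractionRing.injective (subA k) (FractionRing (subA k))
  -- auxiliary elements of A
  set g4 : subA k := ⟨X 0 ^ 9 * X 1 ^ 6, gen4_mem⟩ with hg4
  set g5 : subA k := ⟨X 0 ^ 8 * X 1 ^ 7, gen5_mem⟩ with hg5
  have hA2m : (X 0 ^ 6 * X 1 ^ 14 : MvPolynomial (Fin 2) k) ∈ subA k :=
    memS_mem (by left; decide)
  have hA3m : (X 0 ^ 7 * X 1 ^ 13 : MvPolynomial (Fin 2) k) ∈ subA k :=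
    memS_mem (by left; decide)
  have hA4m : (X 0 ^ 8 * X 1 ^ 12 : MvPolynomial (Fin 2) k) ∈ subA k :=
    memS_mem (by left; decide)
  set A2 : subA k := ⟨X 0 ^ 6 * X 1 ^ 14, hA2m⟩ with hA2
  set A3 : subA k := ⟨X 0 ^ 7 * X 1 ^ 13, hA3m⟩ with hA3
  set A4 : subA k := ⟨X 0 ^ 8 * X 1 ^ 12, hA4m⟩ with hA4
  -- multiplication identities
  have hu2 : u * u = im A2 := by
    apply cancel; apply cancel
    have e1 : c * c = a * (a * A2) := by
      apply Subtype.ext; push_cast; rw [ha, hc]; ring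
    calc im a * (im a * (u * u)) = (im a * u) * (im a * u) := by ring
      _ = im c * im c := by rw [hu]
      _ = im (c * c) := by rw [map_mul]
      _ = im (a * (a * A2)) := by rw [e1]
      _ = im a * (im a * im A2) := by rw [map_mul, map_mul]
  have huv : u * v = im A3 := by
    apply cancel; apply cancel
    have e1 : c * d = a * (a * A3) := by
      apply Subtype.ext; push_cast; rw [ha, hc, hd]; ring
    calc im a * (im a * (u * v)) = (im a * u) * (im a * v) := by ring
      _ = im c * im d := by rw [hu, hv]
      _ = im (c * d) := by rw [map_mul]
      _ = im (a * (a * A3)) := by rw [e1]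
      _ = im a * (im a * im A3) := by rw [map_mul, map_mul]
  have hv2 : v * v = im A4 := by
    apply cancel; apply cancel
    have e1 : d * d = a * (a * A4) := by
      apply Subtype.ext; push_cast; rw [ha, hd]; ring
    calc im a * (im a * (v * v)) = (im a * v) * (im a * v) := by ring
      _ = im d * im d := by rw [hv]
      _ = im (d * d) := by rw [map_mul]
      _ = im (a * (a * A4)) := by rw [e1]
      _ = im a * (im a * im A4) := by rw [map_mul, map_mul]
  have hbu : im b * u = im g5 := by
    apply cancel
    have e1 : b * c = a * g5 := by
      apply Subtype.ext; push_cast; rw [ha, hb, hc]; ring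
    calc im a * (im b * u) = im b * (im a * u) := by ring
      _ = im b * im c := by rw [hu]
      _ = im (b * c) := by rw [map_mul]
      _ = im (a * g5) := by rw [e1]
      _ = im a * im g5 := by rw [map_mul]
  have hbv : im b * v = im g4 := by
    apply cancel
    have e1 : b * d = a * g4 := by
      apply Subtype.ext; push_cast; rw [ha, hb, hd]; ring
    calc im a * (im b * v) = im b * (im a * v) := by ring
      _ = im b * im d := by rw [hv]
      _ = im (b * d) := by rw [map_mul]
      _ = im (a * g4) := by rw [e1]
      _ = im a * im g4 := by rw [map_mul]
  -- the module M = A + Au + Av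
  set M : Set (FractionRing (subA k)) := {x | ∃ z1 z2 z3 : subA k, x = im z1 + u * im z2 + v * im z3} with hM
  have hMmul : ∀ x ∈ M, ∀ y ∈ M, x * y ∈ M := by
    rintro x ⟨z1, z2, z3, rfl⟩ y ⟨w1, w2, w3, rfl⟩
    refine ⟨z1 * w1 + A2 * (z2 * w2) + A3 * (z2 * w3 + z3 * w2) + A4 * (z3 * w3),
      z1 * w2 + z2 * w1, z1 * w3 + z3 * w1, ?_⟩
    simp only [map_add, map_mul]
    linear_combination (im z2 * im w2) * hu2 + (im z2 * im w3 + im z3 * im w2) * huv +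
      (im z3 * im w3) * hv2
  have hMadj : (Algebra.adjoin (subA k) {u, v} : Set (FractionRing (subA k))) = M := by
    apply Set.Subset.antisymm
    · intro x hx
      rw [SetLike.mem_coe] at hx
      induction hx using Algebra.adjoin_induction with
      | mem x hx =>
        rcases hx with rfl | rfl
        · exact ⟨0, 1, 0, by simp⟩
        · exact ⟨0, 0, 1, by simp⟩
      | algebraMap z => exact ⟨z, 0, 0, by simp; rfl⟩
      | add x y hx hy ihx ihy =>
        obtain ⟨z1, z2, z3, rfl⟩ := ihx
        obtain ⟨w1, w2, w3, rfl⟩ := ihy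
        exact ⟨z1 + w1, z2 + w2, z3 + w3, by simp only [map_add]; ring⟩
      | mul x y hx hy ihx ihy => exact hMmul x ihx y ihy
    · rintro x ⟨z1, z2, z3, rfl⟩
      rw [SetLike.mem_coe]
      refine add_mem (add_mem ?_ ?_) ?_
      · exact Subalgebra.algebraMap_mem _ z1
      · exact mul_mem (Algebra.subset_adjoin (by simp)) (Subalgebra.algebraMap_mem _ z2)
      · exact mul_mem (Algebra.subset_adjoin (by simp)) (Subalgebra.algebraMap_mem _ z3)
  constructor
  · -- the intersection equals adjoin A {u, v}
    rw [hMadj]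
    apply Set.Subset.antisymm
    · rintro f ⟨⟨r0, hr0⟩, ⟨s0, hs0⟩⟩
      have hba : r0 * b ∈ Ideal.span {a} := by
        refine Ideal.mem_span_singleton'.mpr ⟨s0, inj ?_⟩
        rw [map_mul, map_mul]
        linear_combination im b * hr0 - im a * hs0
      have hr0span : r0 ∈ Ideal.span {a, c, d} := by
        rw [← hcolon2, Ideal.mem_colon_span_singleton]
        exact hba
      rw [show ({a, c, d} : Set (subA k)) = insert a (insert c {d}) from rfl] at hr0span
      obtain ⟨z1, w, hw, hrw⟩ := Ideal.mem_span_insert.mp hr0span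
      obtain ⟨z2, w', hw', hrw'⟩ := Ideal.mem_span_insert.mp hw
      obtain ⟨z3, hrw''⟩ := Ideal.mem_span_singleton'.mp hw'
      have hr0eq : r0 = z1 * a + z2 * c + z3 * d := by
        rw [hrw, hrw', ← hrw'']; ring
      refine ⟨z1, z2, z3, cancel ?_⟩
      rw [hr0, hr0eq]
      simp only [map_add, map_mul]
      linear_combination (-(im z2)) * hu + (-(im z3)) * hv
    · rintro f ⟨z1, z2, z3, rfl⟩
      constructor
      · refine ⟨a * z1 + c * z2 + d * z3, ?_⟩
        simp only [map_add, map_mul]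
        linear_combination (im z2) * hu + (im z3) * hv
      · refine ⟨b * z1 + g5 * z2 + g4 * z3, ?_⟩
        simp only [map_add, map_mul]
        linear_combination (im z2) * hbu + (im z3) * hbv
  · -- the k-algebra description
    intro p q r hp hq hr
    rw [hMadj]
    letI : Algebra k (FractionRing (subA k)) :=
      ((algebraMap (subA k) (FractionRing (subA k))).comp (algebraMap k (subA k))).toAlgebra
    apply Set.Subset.antisymm
    · -- M ⊆ adjoin k {im p, im q, im r, u, v}
      have him : ∀ (t : MvPolynomial (Fin 2) k),
          t ∈ Algebra.adjoin k {X 0 ^ 5, X 0 * X 1 ^ 4, X 1 ^ 5, X 0 ^ 9 * X 1 ^ 6,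
            X 0 ^ 8 * X 1 ^ 7, X 0 ^ 4 * X 1 ^ 11} →
          ∀ hA : t ∈ subA k,
          im (⟨t, hA⟩ : subA k) ∈ Algebra.adjoin k {im p, im q, im r, u, v} := by
        intro t ht
        induction ht using Algebra.adjoin_induction with
        | mem x hx =>
          rcases hx with rfl | rfl | rfl | rfl | rfl | rfl
          · intro h'
            rw [show (⟨X 0 ^ 5, h'⟩ : subA k) = p from Subtype.ext hp.symm]
            exact Algebra.subset_adjoin (by simp)
          · intro h'
            rw [show (⟨X 0 * X 1 ^ 4, h'⟩ : subA k) = q from Subtype.ext hq.symm]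
            exact Algebra.subset_adjoin (by simp)
          · intro h'
            rw [show (⟨X 1 ^ 5, h'⟩ : subA k) = r from Subtype.ext hr.symm]
            exact Algebra.subset_adjoin (by simp)
          · intro h'
            have he : p * d = a * ⟨X 0 ^ 9 * X 1 ^ 6, h'⟩ := by
              apply Subtype.ext; push_cast; rw [hp, hd, ha]; ring
            have : im (⟨X 0 ^ 9 * X 1 ^ 6, h'⟩ : subA k) = im p * v := by
              apply cancel
              calc im a * im (⟨X 0 ^ 9 * X 1 ^ 6, h'⟩ : subA k)
                  = im (a * ⟨X 0 ^ 9 * X 1 ^ 6, h'⟩) := by rw [map_mul]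
                _ = im (p * d) := by rw [he]
                _ = im p * im d := by rw [map_mul]
                _ = im p * (im a * v) := by rw [hv]
                _ = im a * (im p * v) := by ring
            rw [this]
            exact mul_mem (Algebra.subset_adjoin (by simp)) (Algebra.subset_adjoin (by simp))
          · intro h'
            have he : p * c = a * ⟨X 0 ^ 8 * X 1 ^ 7, h'⟩ := by
              apply Subtype.ext; push_cast; rw [hp, hc, ha]; ring
            have : im (⟨X 0 ^ 8 * X 1 ^ 7, h'⟩ : subA k) = im p * u := by
              apply cancel
              calc im a * im (⟨X 0 ^ 8 * X 1 ^ 7, h'⟩ : subA k)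
                  = im (a * ⟨X 0 ^ 8 * X 1 ^ 7, h'⟩) := by rw [map_mul]
                _ = im (p * c) := by rw [he]
                _ = im p * im c := by rw [map_mul]
                _ = im p * (im a * u) := by rw [hu]
                _ = im a * (im p * u) := by ring
            rw [this]
            exact mul_mem (Algebra.subset_adjoin (by simp)) (Algebra.subset_adjoin (by simp))
          · intro h'
            have he : r * d = a * ⟨X 0 ^ 4 * X 1 ^ 11, h'⟩ := by
              apply Subtype.ext; push_cast; rw [hr, hd, ha]; ring
            have : im (⟨X 0 ^ 4 * X 1 ^ 11, h'⟩ : subA k) = im r * v := by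
              apply cancel
              calc im a * im (⟨X 0 ^ 4 * X 1 ^ 11, h'⟩ : subA k)
                  = im (a * ⟨X 0 ^ 4 * X 1 ^ 11, h'⟩) := by rw [map_mul]
                _ = im (r * d) := by rw [he]
                _ = im r * im d := by rw [map_mul]
                _ = im r * (im a * v) := by rw [hv]
                _ = im a * (im r * v) := by ring
            rw [this]
            exact mul_mem (Algebra.subset_adjoin (by simp)) (Algebra.subset_adjoin (by simp))
        | algebraMap z =>
          intro h'
          have : im (⟨algebraMap k (MvPolynomial (Fin 2) k) z, h'⟩
              : subA k) = algebraMap k (FractionRing (subA k)) z := rfl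
          rw [this]
          exact Subalgebra.algebraMap_mem _ z
        | add x y hx hy ihx ihy =>
          intro h'
          have : (⟨x + y, h'⟩ : subA k) = ⟨x, hx⟩ + ⟨y, hy⟩ := rfl
          rw [this, map_add]
          exact add_mem (ihx hx) (ihy hy)
        | mul x y hx hy ihx ihy =>
          intro h'
          have : (⟨x * y, h'⟩ : subA k) = ⟨x, hx⟩ * ⟨y, hy⟩ := rfl
          rw [this, map_mul]
          exact mul_mem (ihx hx) (ihy hy)
      rintro x ⟨z1, z2, z3, rfl⟩
      rw [SetLike.mem_coe]
      have him' : ∀ z : subA k, im z ∈ Algebra.adjoin k {im p, im q, im r, u, v} := by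
        rintro ⟨zp, hzp⟩
        exact him zp hzp hzp
      refine add_mem (add_mem (him' z1) ?_) ?_
      · exact mul_mem (Algebra.subset_adjoin (by simp)) (him' z2)
      · exact mul_mem (Algebra.subset_adjoin (by simp)) (him' z3)
    · -- adjoin k {...} ⊆ M
      intro x hx
      rw [SetLike.mem_coe] at hx
      induction hx using Algebra.adjoin_induction with
      | mem x hx =>
        rcases hx with rfl | rfl | rfl | rfl | rfl
        · exact ⟨p, 0, 0, by simp⟩
        · exact ⟨q, 0, 0, by simp⟩
        · exact ⟨r, 0, 0, by simp⟩
        · exact ⟨0, 1, 0, by simp⟩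
        · exact ⟨0, 0, 1, by simp⟩
      | algebraMap z => exact ⟨algebraMap k (subA k) z, 0, 0, by simp; rfl⟩
      | add x y hx hy ihx ihy =>
        obtain ⟨z1, z2, z3, rfl⟩ := ihx
        obtain ⟨w1, w2, w3, rfl⟩ := ihy
        exact ⟨z1 + w1, z2 + w2, z3 + w3, by simp only [map_add]; ring⟩
      | mul x y hx hy ihx ihy => exact hMmul x ihx y ihy
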